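/- Let K be a pure, strongly connected d-dimensional simplicial complex whose graph admits a proper (d+1)-coloring (i.e. K is foldable). Then the group of projectivities Π(K, σ₀) is trivial for every facet σ₀. In particular, for any two facets σ, τ and any two facet paths γ, δ from σ to τ, the projectivities ⟨γ⟩ and ⟨δ⟩ coincide. -/

import Mathlib

open Finset

variable {V : Type*} [DecidableEq V]

/-- A (finite abstract) simplicial complex: faces are nonempty and closed under
nonempty subsets. -/
def IsComplex (K : Finset (Finset V)) : Prop :=
  ∀ f ∈ K, f.Nonempty ∧ ∀ g, g ⊆ f → g.Nonempty → g ∈ K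

/-- `K` is pure of dimension `d`: every face is contained in a face with `d+1` vertices. -/
def IsPure (K : Finset (Finset V)) (d : ℕ) : Prop :=
  ∀ f ∈ K, ∃ σ ∈ K, f ⊆ σ ∧ σ.card = d + 1

/-- A facet of a pure `d`-complex: a face with `d+1` vertices. -/
def IsFacet (K : Finset (Finset V)) (d : ℕ) (σ : Finset V) : Prop :=
  σ ∈ K ∧ σ.card = d + 1

/-- Two facets are neighboring if they share a ridge (codimension-1 face). -/
def Neighboring (K : Finset (Finset V)) (d : ℕ) (σ τ : Finset V) : Prop :=
  IsFacet K d σ ∧ IsFacet K d τ ∧ (σ ∩ τ).card = d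

/-- The perspectivity `⟨σ,τ⟩` between neighboring facets: it fixes the common
vertices and sends the vertex `σ \ τ` to the vertex `τ \ σ`. -/
noncomputable def persp (σ τ : Finset V) (v : V) : V :=
  if v ∈ τ then v else if h : (τ \ σ).Nonempty then h.choose else v

/-- The projectivity along a facet path: the composition of consecutive perspectivities. -/
noncomputable def projAlong : List (Finset V) → V → V
  | [] => id
  | [_] => id
  | σ :: τ :: rest => fun v => projAlong (τ :: rest) (persp σ τ v)

/-- A facet path: a nonempty sequence of facets in which consecutive facets share a ridge. -/
def IsFacetPath (K : Finset (Finset V)) (d : ℕ) (γ : List (Finset V)) : Prop :=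
  γ ≠ [] ∧ (∀ σ ∈ γ, IsFacet K d σ) ∧ γ.Chain' (fun σ τ => (σ ∩ τ).card = d)

/-- `K` is strongly connected: any two facets are joined by a facet path. -/
def StronglyConnected (K : Finset (Finset V)) (d : ℕ) : Prop :=
  ∀ σ τ, IsFacet K d σ → IsFacet K d τ →
    ∃ γ, IsFacetPath K d γ ∧ γ.head? = some σ ∧ γ.getLast? = some τ

/-- `K` is locally strongly connected: the star of every face is strongly connected. -/
def LocallyStronglyConnected (K : Finset (Finset V)) (d : ℕ) : Prop :=
  ∀ f ∈ K, ∀ σ τ, IsFacet K d σ → IsFacet K d τ → f ⊆ σ → f ⊆ τ →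
    ∃ γ, IsFacetPath K d γ ∧ γ.head? = some σ ∧ γ.getLast? = some τ ∧ ∀ ρ ∈ γ, f ⊆ ρ

/-- The vertex set of a complex. -/
def vertexSet (K : Finset (Finset V)) : Finset V := K.biUnion id

/-- A proper coloring of the 1-skeleton of `K`: the endpoints of every edge
(2-element face) receive distinct colors. -/
def ProperColoring {α : Type*} (K : Finset (Finset V)) (c : V → α) : Prop :=
  ∀ v w, v ≠ w → ({v, w} : Finset V) ∈ K → c v ≠ c w

/-- A codimension-2 face `f` is odd if its link graph is not 2-colorable (not bipartite). -/
def OddFace (K : Finset (Finset V)) (f : Finset V) : Prop :=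
  ¬ ∃ b : V → Bool, ∀ w w', w ∉ f → w' ∉ f → w ≠ w' →
      f ∪ {w, w'} ∈ K → b w ≠ b w'

/-- Stellar subdivision of the edge `e` of `K` by the new vertex `u`:
faces not containing `e` are kept; every face containing `e` is replaced by the
cones of `u` over the faces of its boundary not containing `e`. -/
def stellarSub (K : Finset (Finset V)) (e : Finset V) (u : V) : Finset (Finset V) :=
  K.filter (fun f => ¬ e ⊆ f) ∪
    (K.filter fun f => e ⊆ f).biUnion fun f =>
      e.biUnion fun x => ((f.erase x).powerset).image fun g => insert u g

/-- `EdgeSubdivSeq K K'` : `K'` is obtained from `K` by a finite sequence of stellar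
subdivisions of edges (each subdividing vertex being a fresh vertex). -/
inductive EdgeSubdivSeq : Finset (Finset V) → Finset (Finset V) → Prop
  | refl (K : Finset (Finset V)) : EdgeSubdivSeq K K
  | step (K L : Finset (Finset V)) (e : Finset V) (u : V) :
      EdgeSubdivSeq K L → e ∈ L → e.card = 2 → u ∉ vertexSet L →
      EdgeSubdivSeq K (stellarSub L e u)

/-- A boundary ridge: a `(d-1)`-dimensional face contained in exactly one facet. -/
def IsBoundaryRidge (K : Finset (Finset V)) (d : ℕ) (g : Finset V) : Prop :=
  g ∈ K ∧ g.card = d ∧ (K.filter fun τ => τ.card = d + 1 ∧ g ⊆ τ).card = 1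

section Aux

variable (K : Finset (Finset V)) (d : ℕ)

/-- The coloring is injective on every face. -/
lemma aux_color_injOn {α : Type*} (hK : IsComplex K) (c : V → α) (hc : ProperColoring K c)
    {σ : Finset V} (hσ : σ ∈ K) {v w : V} (hv : v ∈ σ) (hw : w ∈ σ) (hvw : v ≠ w) :
    c v ≠ c w := by
  apply hc v w hvw
  refine (hK σ hσ).2 {v, w} ?_ ⟨v, by simp⟩
  intro x hx
  simp only [Finset.mem_insert, Finset.mem_singleton] at hx
  rcases hx with rfl | rfl <;> assumption

lemma aux_persp_spec (hK : IsComplex K) (c : V → Fin (d + 1)) (hc : ProperColoring K c)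
    {σ τ : Finset V} (hσ : IsFacet K d σ) (hτ : IsFacet K d τ) (hcd : (σ ∩ τ).card = d)
    {v : V} (hv : v ∈ σ) : persp σ τ v ∈ τ ∧ c (persp σ τ v) = c v := by
  by_cases hvτ : v ∈ τ
  · simp [persp, hvτ]
  · have hne : (τ \ σ).Nonempty := by
      rw [← Finset.card_pos]
      have h1 : (τ \ σ).card + (τ ∩ σ).card = τ.card := Finset.card_sdiff_add_card_inter τ σ
      rw [Finset.inter_comm] at h1
      have h2 := hτ.2
      omega
    have hw : hne.choose ∈ τ \ σ := hne.choose_spec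
    rw [Finset.mem_sdiff] at hw
    simp only [persp, hvτ, if_false, dif_pos hne]
    refine ⟨hw.1, ?_⟩
    -- both `c v` and `c hne.choose` avoid the `d` colors of `σ ∩ τ`
    set w := hne.choose with hwdef
    set S : Finset (Fin (d + 1)) := (σ ∩ τ).image c with hS
    have hScard : S.card = d := by
      rw [hS, Finset.card_image_of_injOn, hcd]
      intro x hx y hy hxy
      by_contra hne'
      exact aux_color_injOn K hK c hc hσ.1 (Finset.mem_of_mem_inter_left hx)
        (Finset.mem_of_mem_inter_left hy) hne' hxy
    have hvS : c v ∉ S := by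
      rw [hS, Finset.mem_image]
      rintro ⟨x, hx, hxv⟩
      rw [Finset.mem_inter] at hx
      exact aux_color_injOn K hK c hc hσ.1 hx.1 hv (fun h => hvτ (h ▸ hx.2)) hxv
    have hwS : c w ∉ S := by
      rw [hS, Finset.mem_image]
      rintro ⟨x, hx, hxv⟩
      rw [Finset.mem_inter] at hx
      exact aux_color_injOn K hK c hc hτ.1 hx.2 hw.1 (fun h => hw.2 (h ▸ hx.1)) hxv
    have hcompl : Sᶜ.card = 1 := by
      rw [Finset.card_compl, hScard, Fintype.card_fin]
      omega
    obtain ⟨a, ha⟩ := Finset.card_eq_one.mp hcompl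
    have h1 : c w ∈ Sᶜ := Finset.mem_compl.mpr hwS
    have h2 : c v ∈ Sᶜ := Finset.mem_compl.mpr hvS
    rw [ha, Finset.mem_singleton] at h1 h2
    rw [h1, h2]

lemma aux_projAlong_spec (hK : IsComplex K) (c : V → Fin (d + 1)) (hc : ProperColoring K c) :
    ∀ γ : List (Finset V), ∀ σ τ : Finset V, IsFacetPath K d γ →
      γ.head? = some σ → γ.getLast? = some τ →
      ∀ v ∈ σ, projAlong γ v ∈ τ ∧ c (projAlong γ v) = c v := by
  intro γ
  induction γ with
  | nil => intro σ τ h; exact absurd rfl h.1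
  | cons σ₁ rest ih =>
    intro σ τ hpath hhead hlast v hv
    simp only [List.head?_cons, Option.some.injEq] at hhead
    subst hhead
    match rest, hpath, hlast with
    | [], _, hlast =>
      simp only [List.getLast?_singleton, Option.some.injEq] at hlast
      subst hlast
      exact ⟨hv, rfl⟩
    | τ₁ :: rest', hpath, hlast =>
      have hfσ : IsFacet K d σ₁ := hpath.2.1 σ₁ (by simp)
      have hfτ : IsFacet K d τ₁ := hpath.2.1 τ₁ (by simp)
      have hchain := hpath.2.2
      rw [List.Chain', List.isChain_cons_cons] at hchain
      have hspec := aux_persp_spec K d hK c hc hfσ hfτ hchain.1 hv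
      have hpath' : IsFacetPath K d (τ₁ :: rest') :=
        ⟨by simp, fun ρ hρ => hpath.2.1 ρ (List.mem_cons_of_mem _ hρ), hchain.2⟩
      have hlast' : (τ₁ :: rest').getLast? = some τ := by
        rwa [List.getLast?_cons_cons] at hlast
      have hih := ih τ₁ τ hpath' rfl hlast' (persp σ₁ τ₁ v) hspec.1
      refine ⟨hih.1, ?_⟩
      show c (projAlong (τ₁ :: rest') (persp σ₁ τ₁ v)) = c v
      rw [hih.2, hspec.2]

end Aux

/-- For a pure, strongly connected, foldable `d`-complex the group of
projectivities is trivial; in particular any two facet paths with the same endpoints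
induce the same projectivity. -/
theorem foldable_projectivities_trivial
    (K : Finset (Finset V)) (d : ℕ) (hK : IsComplex K) (hpure : IsPure K d)
    (hconn : StronglyConnected K d)
    (c : V → Fin (d + 1)) (hc : ProperColoring K c) :
    (∀ σ₀ γ, IsFacetPath K d γ → γ.head? = some σ₀ → γ.getLast? = some σ₀ →
      ∀ v ∈ σ₀, projAlong γ v = v) ∧
    (∀ σ τ γ δ, IsFacetPath K d γ → IsFacetPath K d δ →
      γ.head? = some σ → δ.head? = some σ →
      γ.getLast? = some τ → δ.getLast? = some τ →
      ∀ v ∈ σ, projAlong γ v = projAlong δ v) := by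
  have key := aux_projAlong_spec K d hK c hc
  have main : ∀ σ τ γ, IsFacetPath K d γ → γ.head? = some σ → γ.getLast? = some τ →
      IsFacet K d τ → ∀ v ∈ σ, ∀ x ∈ τ, c x = c v → projAlong γ v = x := by
    intro σ τ γ hγ hh hl hτ v hv x hx hcx
    obtain ⟨hmem, hcol⟩ := key γ σ τ hγ hh hl v hv
    by_contra hne
    exact aux_color_injOn K hK c hc hτ.1 hmem hx hne (by rw [hcol, hcx])
  have facet_of_head : ∀ γ σ, IsFacetPath K d γ → γ.head? = some σ → IsFacet K d σ := by
    intro γ σ hγ hh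
    cases γ with
    | nil => exact absurd rfl hγ.1
    | cons a l =>
      simp only [List.head?_cons, Option.some.injEq] at hh
      exact hh ▸ hγ.2.1 a (by simp)
  have facet_of_last : ∀ γ τ, IsFacetPath K d γ → γ.getLast? = some τ → IsFacet K d τ := by
    intro γ τ hγ hl
    have : τ ∈ γ := List.mem_of_getLast? hl
    exact hγ.2.1 τ this
  constructor
  · intro σ₀ γ hγ hh hl v hv
    exact main σ₀ σ₀ γ hγ hh hl (facet_of_last γ σ₀ hγ hl) v hv v hv rfl
  · intro σ τ γ δ hγ hδ hhγ hhδ hlγ hlδ v hv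
    have hτ := facet_of_last γ τ hγ hlγ
    obtain ⟨hmem, hcol⟩ := key δ σ τ hδ hhδ hlδ v hv
    exact main σ τ γ hγ hhγ hlγ hτ v hv (projAlong δ v) hmem hcol
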